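/- Let X be a metric space, let I ⊔ J be a partition of {1,…,n}, let w_1,…,w_n be positive weights summing to 1 with total contaminated weight W_I = ∑_{i∈I} w_i, let K be a nonempty subset of X containing z_j for all j ∈ J, and let z'_i ∈ X for i ∈ I be arbitrary. Define F'(z) = ∑_{j∈J} w_j d(z, z_j) + ∑_{i∈I} w_i d(z, z'_i). Then for every z ∈ X, F'(z) ≥ (1 − 2 W_I) · d(z, K) + ∑_{i∈I} w_i d(z'_i, K), where d(z, K) = inf_{k∈K} d(z, k). -/

import Mathlib

open scoped BigOperators

/-- Lower bound on the contaminated objective. With clean points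
`z j ∈ K` for `j ∈ J` and arbitrary contaminated points `z' i` for `i ∈ I`,
`F'(p) ≥ (1 − 2 W_I) d(p,K) + ∑_{i∈I} wᵢ d(z'ᵢ, K)` for every `p`. -/
theorem contaminated_objective_lower_bound
    {X : Type*} [MetricSpace X]
    {n : ℕ} (I J : Finset (Fin n))
    (hdisj : Disjoint I J) (hcover : I ∪ J = Finset.univ)
    (w : Fin n → ℝ) (hw : ∀ i, 0 < w i) (hsum : ∑ i, w i = 1)
    (K : Set X) (hK : K.Nonempty)
    (z : Fin n → X) (hz : ∀ j ∈ J, z j ∈ K)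
    (z' : Fin n → X) :
    ∀ p : X,
      (1 - 2 * ∑ i ∈ I, w i) * Metric.infDist p K +
          ∑ i ∈ I, w i * Metric.infDist (z' i) K ≤
        (∑ j ∈ J, w j * dist p (z j)) + ∑ i ∈ I, w i * dist p (z' i) := by
  intro p
  have hJsum : ∑ j ∈ J, w j = 1 - ∑ i ∈ I, w i := by
    have : ∑ i ∈ I, w i + ∑ j ∈ J, w j = 1 := by
      rw [← Finset.sum_union hdisj, hcover]; exact hsum
    linarith
  have h1 : ∑ j ∈ J, w j * Metric.infDist p K ≤ ∑ j ∈ J, w j * dist p (z j) := by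
    apply Finset.sum_le_sum
    intro j hj
    exact mul_le_mul_of_nonneg_left (Metric.infDist_le_dist_of_mem (hz j hj)) (hw j).le
  have h2 : ∑ i ∈ I, w i * (Metric.infDist (z' i) K - Metric.infDist p K)
      ≤ ∑ i ∈ I, w i * dist p (z' i) := by
    apply Finset.sum_le_sum
    intro i _
    have := Metric.infDist_le_infDist_add_dist (x := z' i) (y := p) (s := K)
    have hd : Metric.infDist (z' i) K - Metric.infDist p K ≤ dist p (z' i) := by
      rw [dist_comm]; linarith
    exact mul_le_mul_of_nonneg_left hd (hw i).le
  rw [← Finset.sum_mul] at h1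
  simp_rw [mul_sub] at h2
  rw [Finset.sum_sub_distrib, ← Finset.sum_mul] at h2
  rw [hJsum] at h1
  have key : (1 - 2 * ∑ i ∈ I, w i) * Metric.infDist p K =
      (1 - ∑ i ∈ I, w i) * Metric.infDist p K -
        (∑ i ∈ I, w i) * Metric.infDist p K := by ring
  linarith [h1, h2]
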